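/- Let γ_1, …, γ_{k+1} ∈ ℝ satisfy ∑_{i=1}^{k+1} γ_i = 0 and ∑_{i=1}^k γ_i a_i = 0. Then for every integer m ≥ 1, the identity ∑_{i=1}^{k+1} γ_i (∂^m V/∂κ_i^m)(κ) = 0 holds for all κ ∈ ℝ^{k+3}. -/

import Mathlib

open MeasureTheory Finset
open scoped Pointwise Classical

noncomputable section

namespace ToricStmt

/-- Euclidean `n`-space. -/
abbrev E (n : ℕ) : Type := EuclideanSpace ℝ (Fin n)

/-- The real vector associated to an integer vector. -/
def iv {n : ℕ} (g : Fin n → ℤ) : E n := WithLp.toLp 2 (fun t => (g t : ℝ))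

/-- The standard pairing/dot product. -/
def dot {n : ℕ} (u v : E n) : ℝ := ∑ i, u i * v i

/-- An integer vector is primitive if the gcd of its coordinates is `1`. -/
def IsPrimitive {n : ℕ} (g : Fin n → ℤ) : Prop := Finset.univ.gcd g = 1

/-- The polytope `Δ(κ) = {x : ⟨η i, x⟩ ≤ κ i for all i}`. -/
def Delta {n N : ℕ} (η : Fin N → Fin n → ℤ) (κ : Fin N → ℝ) : Set (E n) :=
  {x | ∀ i, dot (iv (η i)) x ≤ κ i}

/-- The face `F_I(κ)` of `Δ(κ)`. -/
def Face {n N : ℕ} (η : Fin N → Fin n → ℤ) (κ : Fin N → ℝ) (I : Finset (Fin N)) :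
    Set (E n) :=
  {x | x ∈ Delta η κ ∧ ∀ i ∈ I, dot (iv (η i)) x = κ i}

/-- A vertex of `Δ(κ)` is a point which is a face. -/
def IsVertex {n N : ℕ} (η : Fin N → Fin n → ℤ) (κ : Fin N → ℝ) (x : E n) : Prop :=
  ∃ I : Finset (Fin N), Face η κ I = {x}

/-- The dimension of (the affine hull of) a subset of `E n`. -/
def faceDim {n : ℕ} (F : Set (E n)) : ℕ := Module.finrank ℝ (vectorSpan ℝ F)

/-- The set of constraints active at `x`. -/
def activeIdx {n N : ℕ} (η : Fin N → Fin n → ℤ) (κ : Fin N → ℝ) (x : E n) :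
    Finset (Fin N) :=
  Finset.univ.filter fun i => dot (iv (η i)) x = κ i

/-- `Δ(κ)` is a smooth polytope: compact with nonempty interior, all facets of
dimension `n - 1`, and at each vertex exactly `n` facets meet, whose conormals form a
`ℤ`-basis of `ℤⁿ`. -/
def IsSmoothPolytope {n N : ℕ} (η : Fin N → Fin n → ℤ) (κ : Fin N → ℝ) : Prop :=
  IsCompact (Delta η κ) ∧ (interior (Delta η κ)).Nonempty ∧
  (∀ i, faceDim (Face η κ {i}) = n - 1) ∧
  ∀ x, IsVertex η κ x →
    (activeIdx η κ x).card = n ∧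
    Submodule.span ℤ (↑((activeIdx η κ x).image η) : Set (Fin n → ℤ)) = ⊤

/-- A chamber neighbourhood of `κ`: an open connected set of support constants containing
`κ` on which the polytope stays smooth with the same combinatorics. -/
def IsChamberNbhd {n N : ℕ} (η : Fin N → Fin n → ℤ) (κ : Fin N → ℝ)
    (U : Set (Fin N → ℝ)) : Prop :=
  IsOpen U ∧ IsConnected U ∧ κ ∈ U ∧
  ∀ κ' ∈ U, IsSmoothPolytope η κ' ∧
    ∀ I : Finset (Fin N), ((Face η κ' I).Nonempty ↔ (Face η κ I).Nonempty)

/-- The barycenter of `Δ(κ)` with respect to Lebesgue measure. -/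
def bary {n N : ℕ} (η : Fin N → Fin n → ℤ) (κ : Fin N → ℝ) : E n :=
  (volume (Delta η κ)).toReal⁻¹ • ∫ x in Delta η κ, x

/-- `H` is mass linear on `U` with coefficients `γ`. -/
def MassLinearOn {n N : ℕ} (η : Fin N → Fin n → ℤ) (H : E n)
    (U : Set (Fin N → ℝ)) (γ : Fin N → ℝ) : Prop :=
  ∀ κ' ∈ U, dot H (bary η κ') = ∑ i, γ i * κ' i

/-- `v` and `w` are the two endpoints of an edge (a one-dimensional face) of `Δ(κ)`. -/
def IsEdgeBetween {n N : ℕ} (η : Fin N → Fin n → ℤ) (κ : Fin N → ℝ)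
    (v w : E n) : Prop :=
  v ≠ w ∧ IsVertex η κ v ∧ IsVertex η κ w ∧
  ∃ I : Finset (Fin N), Face η κ I = segment ℝ v w

/-- Conormals of the `Δ_k`-bundle over the `1`-simplex determined by `a ∈ ℤᵏ`:
`η_i = -e_i` for `i ≤ k`, `η_{k+1} = e_1 + ⋯ + e_k`, `η_{k+2} = -e_{k+1}`,
`η_{k+3} = e_{k+1} + ∑ a_i e_i`. -/
def bEta (k : ℕ) (a : Fin k → ℤ) : Fin (k + 3) → Fin (k + 1) → ℤ := fun j t =>
  if (j : ℕ) < k then (if (t : ℕ) = (j : ℕ) then -1 else 0)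
  else if (j : ℕ) = k then (if (t : ℕ) < k then 1 else 0)
  else if (j : ℕ) = k + 1 then (if (t : ℕ) = k then -1 else 0)
  else (if ht : (t : ℕ) < k then a ⟨(t : ℕ), ht⟩ else 1)

/-- `λ(κ) = κ_1 + ⋯ + κ_{k+1}`. -/
def lamF (k : ℕ) (κ : Fin (k + 3) → ℝ) : ℝ :=
  ∑ i : Fin (k + 1), κ (Fin.castLE (by omega) i)

/-- `h(κ) = κ_{k+2} + κ_{k+3} + ∑ a_i κ_i`. -/
def hF (k : ℕ) (a : Fin k → ℤ) (κ : Fin (k + 3) → ℝ) : ℝ :=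
  κ ⟨k + 1, by omega⟩ + κ ⟨k + 2, by omega⟩ +
    ∑ i : Fin k, (a i : ℝ) * κ (Fin.castLE (by omega) i)

/-- The chamber of the `Δ_k`-bundle over the `1`-simplex. -/
def chamber (k : ℕ) (a : Fin k → ℤ) : Set (Fin (k + 3) → ℝ) :=
  {κ | 0 < lamF k κ ∧ 0 < hF k a κ ∧
       ∀ i : Fin k, 0 < hF k a κ - lamF k κ * (a i : ℝ)}

/-- The volume polynomial of the `Δ_k`-bundle over the `1`-simplex. -/
def Vbundle (k : ℕ) (a : Fin k → ℤ) (κ : Fin (k + 3) → ℝ) : ℝ :=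
  (1 / (Nat.factorial k : ℝ)) * hF k a κ * (lamF k κ) ^ k -
  (1 / (Nat.factorial (k + 1) : ℝ)) * (∑ i, (a i : ℝ)) * (lamF k κ) ^ (k + 1)

/-- The `k`-th partial derivative `∂^k f / ∂κ_i^k` at `κ`. -/
def pder {N : ℕ} (k : ℕ) (i : Fin N) (f : (Fin N → ℝ) → ℝ) (κ : Fin N → ℝ) : ℝ :=
  iteratedDeriv k (fun t => f (Function.update κ i t)) (κ i)

/-- The volume of `Δ(κ)` as a function of the support constants. -/
def volFn {n N : ℕ} (η : Fin N → Fin n → ℤ) (κ : Fin N → ℝ) : ℝ :=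
  (volume (Delta η κ)).toReal

/-- Coefficient of the varying direction in `hF`. -/
def cF (k : ℕ) (a : Fin k → ℤ) (i : Fin (k + 1)) : ℝ :=
  if h : (i : ℕ) < k then (a ⟨(i : ℕ), h⟩ : ℝ) else 0

/-- The `i`-independent part of `V` along a coordinate line. -/
def Afun (k : ℕ) (a : Fin k → ℤ) (κ : Fin (k + 3) → ℝ) : ℝ → ℝ := fun u =>
  (1 / (Nat.factorial k : ℝ)) * hF k a κ * (lamF k κ + u) ^ k -
  (1 / (Nat.factorial (k + 1) : ℝ)) * (∑ i, (a i : ℝ)) * (lamF k κ + u) ^ (k + 1)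

/-- The part of `V` along a coordinate line multiplying `cF`. -/
def Bfun (k : ℕ) (κ : Fin (k + 3) → ℝ) : ℝ → ℝ := fun u =>
  (1 / (Nat.factorial k : ℝ)) * u * (lamF k κ + u) ^ k

lemma lam_update (k : ℕ) (κ : Fin (k + 3) → ℝ) (hle : k + 1 ≤ k + 3)
    (i : Fin (k + 1)) (t : ℝ) :
    lamF k (Function.update κ (Fin.castLE hle i) t)
      = lamF k κ + (t - κ (Fin.castLE hle i)) := by
  unfold lamF
  have key : ∀ i' : Fin (k + 1),
      Function.update κ (Fin.castLE hle i) t (Fin.castLE (by omega) i')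
        = (if i' = i then t - κ (Fin.castLE hle i) else 0)
          + κ (Fin.castLE (by omega) i') := by
    intro i'
    rw [Function.update_apply]
    by_cases h : i' = i
    · subst h
      have : (Fin.castLE (by omega : k + 1 ≤ k + 3) i' : Fin (k + 3))
          = Fin.castLE hle i' := by ext; simp
      simp [this]
    · have : (Fin.castLE (by omega : k + 1 ≤ k + 3) i' : Fin (k + 3))
          ≠ Fin.castLE hle i := by
        intro hc
        exact h (by ext; simpa using congrArg Fin.val hc)
      simp [this, h]
  simp_rw [key]
  rw [Finset.sum_add_distrib, Finset.sum_ite_eq' Finset.univ i]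
  simp
  ring

lemma hF_update (k : ℕ) (a : Fin k → ℤ) (κ : Fin (k + 3) → ℝ) (hle : k + 1 ≤ k + 3)
    (i : Fin (k + 1)) (t : ℝ) :
    hF k a (Function.update κ (Fin.castLE hle i) t)
      = hF k a κ + cF k a i * (t - κ (Fin.castLE hle i)) := by
  unfold hF
  have h1 : (⟨k + 1, by omega⟩ : Fin (k + 3)) ≠ Fin.castLE hle i := by
    intro hc
    have := congrArg Fin.val hc
    simp at this
    omega
  have h2 : (⟨k + 2, by omega⟩ : Fin (k + 3)) ≠ Fin.castLE hle i := by
    intro hc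
    have := congrArg Fin.val hc
    simp at this
    omega
  rw [Function.update_of_ne h1, Function.update_of_ne h2]
  have key : ∀ i' : Fin k,
      Function.update κ (Fin.castLE hle i) t (Fin.castLE (by omega) i')
        = (if (i' : ℕ) = (i : ℕ) then t - κ (Fin.castLE hle i) else 0)
          + κ (Fin.castLE (by omega) i') := by
    intro i'
    rw [Function.update_apply]
    by_cases h : (i' : ℕ) = (i : ℕ)
    · have hc : (Fin.castLE (by omega : k ≤ k + 3) i' : Fin (k + 3))
          = Fin.castLE hle i := by ext; simpa using h
      simp [hc, h]
    · have hc : (Fin.castLE (by omega : k ≤ k + 3) i' : Fin (k + 3))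
          ≠ Fin.castLE hle i := by
        intro hc
        exact h (by simpa using congrArg Fin.val hc)
      simp [hc, h]
  simp_rw [key, mul_add, mul_ite, mul_zero]
  rw [Finset.sum_add_distrib]
  have hsum : ∑ i' : Fin k,
      (if (i' : ℕ) = (i : ℕ) then (a i' : ℝ) * (t - κ (Fin.castLE hle i)) else 0)
        = cF k a i * (t - κ (Fin.castLE hle i)) := by
    unfold cF
    by_cases hi : (i : ℕ) < k
    · rw [dif_pos hi, Finset.sum_eq_single (⟨(i : ℕ), hi⟩ : Fin k)]
      · simp
      · intro b _ hb
        have : (b : ℕ) ≠ (i : ℕ) := fun h => hb (by ext; simpa using h)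
        simp [this]
      · simp
    · rw [dif_neg hi, zero_mul]
      apply Finset.sum_eq_zero
      intro i' _
      have : (i' : ℕ) ≠ (i : ℕ) := by omega
      simp [this]
  rw [hsum]
  ring

lemma V_update (k : ℕ) (a : Fin k → ℤ) (κ : Fin (k + 3) → ℝ) (hle : k + 1 ≤ k + 3)
    (i : Fin (k + 1)) (t : ℝ) :
    Vbundle k a (Function.update κ (Fin.castLE hle i) t)
      = Afun k a κ (t - κ (Fin.castLE hle i))
        + cF k a i * Bfun k κ (t - κ (Fin.castLE hle i)) := by
  unfold Vbundle Afun Bfun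
  rw [lam_update k κ hle i t, hF_update k a κ hle i t]
  ring

lemma contDiff_Afun (k : ℕ) (a : Fin k → ℤ) (κ : Fin (k + 3) → ℝ) (n : ℕ) :
    ContDiff ℝ n (Afun k a κ) := by
  unfold Afun
  exact ((contDiff_const.mul ((contDiff_const.add contDiff_id).pow k))).sub
    ((contDiff_const.mul ((contDiff_const.add contDiff_id).pow (k + 1))))

lemma contDiff_Bfun (k : ℕ) (κ : Fin (k + 3) → ℝ) (n : ℕ) :
    ContDiff ℝ n (Bfun k κ) := by
  unfold Bfun
  exact (contDiff_const.mul contDiff_id).mul ((contDiff_const.add contDiff_id).pow k)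

lemma iteratedDeriv_split (n : ℕ) (f g : ℝ → ℝ) (hf : ContDiff ℝ n f)
    (hg : ContDiff ℝ n g) (x : ℝ) (c : ℝ) :
    iteratedDeriv n (fun t => f t + c * g t) x
      = iteratedDeriv n f x + c * iteratedDeriv n g x := by
  simp_rw [← iteratedDerivWithin_univ]
  rw [show (fun t => f t + c * g t) = (f + fun t => c * g t) from rfl,
    iteratedDerivWithin_add (Set.mem_univ x) uniqueDiffOn_univ hf.contDiffWithinAt
      (contDiff_const.mul hg).contDiffWithinAt,
    iteratedDerivWithin_const_mul (Set.mem_univ x) uniqueDiffOn_univ c hg.contDiffWithinAt]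

lemma pder_eq (k : ℕ) (a : Fin k → ℤ) (κ : Fin (k + 3) → ℝ) (hle : k + 1 ≤ k + 3)
    (m : ℕ) (i : Fin (k + 1)) :
    pder m (Fin.castLE hle i) (Vbundle k a) κ
      = iteratedDeriv m (Afun k a κ) 0 + cF k a i * iteratedDeriv m (Bfun k κ) 0 := by
  unfold pder
  set x := κ (Fin.castLE hle i) with hx
  set F : ℝ → ℝ := fun u => Afun k a κ u + cF k a i * Bfun k κ u with hFdef
  have h1 : (fun t => Vbundle k a (Function.update κ (Fin.castLE hle i) t))
      = fun t => F (t + (-x)) := by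
    funext t
    rw [hFdef]
    simp only
    rw [V_update k a κ hle i t, ← sub_eq_add_neg, ← hx]
  rw [h1, congrFun (iteratedDeriv_comp_add_const m F (-x)) x, add_neg_cancel, hFdef]
  exact iteratedDeriv_split m _ _ (contDiff_Afun k a κ m) (contDiff_Bfun k κ m) 0 _

/-- For the volume polynomial `V` of the `Δ_k`-bundle over the
`1`-simplex determined by `a`, if `∑ γ_i = 0` and `∑ γ_i a_i = 0`, then
`∑ γ_i ∂^m V / ∂κ_i^m = 0` for every `m ≥ 1`. -/

theorem stmt18 (k : ℕ) (hk : 1 ≤ k) (a : Fin k → ℤ) (γ : Fin (k + 1) → ℝ)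
    (h1 : ∑ i, γ i = 0)
    (h2 : ∑ i : Fin k, γ (Fin.castLE (by omega) i) * (a i : ℝ) = 0) :
    ∀ m : ℕ, 1 ≤ m → ∀ κ : Fin (k + 3) → ℝ,
      ∑ i : Fin (k + 1), γ i * pder m (Fin.castLE (by omega) i) (Vbundle k a) κ = 0 := by
  intro m hm κ
  have hc : ∑ i : Fin (k + 1), γ i * cF k a i = 0 := by
    rw [Fin.sum_univ_castSucc]
    have hlast : cF k a (Fin.last k) = 0 := by
      unfold cF
      rw [dif_neg (by simp)]
    have hcs : ∀ i : Fin k, cF k a (Fin.castSucc i) = (a i : ℝ) := by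
      intro i
      unfold cF
      have h : ((Fin.castSucc i : Fin (k + 1)) : ℕ) < k := by simpa using i.isLt
      rw [dif_pos h]
      have he : (⟨((Fin.castSucc i : Fin (k + 1)) : ℕ), h⟩ : Fin k) = i := by ext; simp
      rw [he]
    have hγ : ∀ i : Fin k, γ (Fin.castSucc i) = γ (Fin.castLE (by omega) i) := by
      intro i
      have : Fin.castSucc i = Fin.castLE (by omega : k ≤ k + 1) i := by ext; simp
      rw [this]
    simp only [hlast, hcs, mul_zero, add_zero]
    rw [← h2]
    exact Finset.sum_congr rfl fun i _ => by rw [hγ i]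
  have hsum : ∑ i : Fin (k + 1), γ i * pder m (Fin.castLE (by omega) i) (Vbundle k a) κ
      = ∑ i : Fin (k + 1), (γ i * iteratedDeriv m (Afun k a κ) 0
          + (γ i * cF k a i) * iteratedDeriv m (Bfun k κ) 0) :=
    Finset.sum_congr rfl fun i _ => by
      rw [pder_eq k a κ (by omega) m i]; ring
  rw [hsum, Finset.sum_add_distrib, ← Finset.sum_mul, ← Finset.sum_mul, h1, hc,
    zero_mul, zero_mul, add_zero]

end ToricStmt
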